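/- arXiv:1006.4804 — 2 statements merged into one kernel-verified Lean document; each statement's English description precedes it below -/
import Mathlib

section
/- Let X : ℝ → Matrix (Fin n) (Fin n) ℝ be continuous on [0, b]. Then the matrix-valued function ℱ(X) is differentiable on (0, b) and satisfies the matrix differential equation d/dx ℱ(X)(x) = ℱ(X)(x) · X(x), with ℱ(X)(0) = 1. -/
open MeasureTheory Matrix

/- Matrices are equipped with the elementwise sup norm. -/
attribute [local instance] Matrix.normedAddCommGroup Matrix.normedSpace

/-- Terms of the left integral series: `E_0(x) = 1`, `E_{k+1}(x) = ∫_0^x X(t) * E_k(t) dt`. -/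
noncomputable def lterm {ι : Type*} [Fintype ι] [DecidableEq ι]
    (X : ℝ → Matrix ι ι ℝ) : ℕ → ℝ → Matrix ι ι ℝ
  | 0, _ => 1
  | k + 1, x => ∫ t in (0:ℝ)..x, X t * lterm X k t

/-- The left integral series `ℰ(X)(x) = ∑_{k=0}^∞ E_k(x)`. -/
noncomputable def ES {ι : Type*} [Fintype ι] [DecidableEq ι]
    (X : ℝ → Matrix ι ι ℝ) (x : ℝ) : Matrix ι ι ℝ := ∑' k, lterm X k x

/-- Terms of the right integral series: `F_0(x) = 1`, `F_{k+1}(x) = ∫_0^x F_k(t) * X(t) dt`. -/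
noncomputable def rterm {ι : Type*} [Fintype ι] [DecidableEq ι]
    (X : ℝ → Matrix ι ι ℝ) : ℕ → ℝ → Matrix ι ι ℝ
  | 0, _ => 1
  | k + 1, x => ∫ t in (0:ℝ)..x, rterm X k t * X t

/-- The right integral series `ℱ(X)(x) = ∑_{k=0}^∞ F_k(x)`. -/
noncomputable def FS {ι : Type*} [Fintype ι] [DecidableEq ι]
    (X : ℝ → Matrix ι ι ℝ) (x : ℝ) : Matrix ι ι ℝ := ∑' k, rterm X k x

set_option maxHeartbeats 1000000

instance matENormedAddCommMonoid {n : ℕ} : ENormedAddCommMonoid (Matrix (Fin n) (Fin n) ℝ) :=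
  @NormedAddCommGroup.toENormedAddCommMonoid _ Matrix.normedAddCommGroup

instance matPMS {n : ℕ} : TopologicalSpace.PseudoMetrizableSpace (Matrix (Fin n) (Fin n) ℝ) :=
  @PseudoEMetricSpace.pseudoMetrizableSpace _ inferInstance

lemma mat_norm_mul_le {n : ℕ} (A B : Matrix (Fin n) (Fin n) ℝ) : ‖A * B‖ ≤ n * ‖A‖ * ‖B‖ := by
  rw [Matrix.norm_le_iff (by positivity)]
  intro i j
  rw [Matrix.mul_apply]
  calc ‖∑ k, A i k * B k j‖ ≤ ∑ k, ‖A i k * B k j‖ := norm_sum_le _ _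
    _ ≤ ∑ _k : Fin n, ‖A‖ * ‖B‖ := Finset.sum_le_sum fun k _ => by
        rw [norm_mul]
        exact mul_le_mul (Matrix.norm_entry_le_entrywise_sup_norm A)
          (Matrix.norm_entry_le_entrywise_sup_norm B) (norm_nonneg _) (norm_nonneg _)
    _ = n * ‖A‖ * ‖B‖ := by simp [Finset.sum_const, mul_assoc]

lemma mat_norm_one_le {n : ℕ} : ‖(1 : Matrix (Fin n) (Fin n) ℝ)‖ ≤ 1 := by
  rw [Matrix.norm_le_iff zero_le_one]
  intro i j
  rw [Matrix.one_apply]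
  split <;> simp

lemma rterm_continuousOn {n : ℕ} {b : ℝ} (hb : 0 ≤ b) {X : ℝ → Matrix (Fin n) (Fin n) ℝ}
    (hX : ContinuousOn X (Set.Icc 0 b)) (k : ℕ) :
    ContinuousOn (rterm X k) (Set.Icc 0 b) := by
  induction k with
  | zero => exact continuousOn_const
  | succ k ih =>
      have heq : rterm X (k + 1) = fun x => ∫ t in (0:ℝ)..x, rterm X k t * X t := rfl
      rw [heq]
      have huIcc : Set.uIcc (0:ℝ) b = Set.Icc 0 b := Set.uIcc_of_le hb
      have hint : IntegrableOn (fun t => rterm X k t * X t) (Set.uIcc (0:ℝ) b) volume := by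
        rw [huIcc]
        exact (ih.mul hX).integrableOn_compact isCompact_Icc
      have := intervalIntegral.continuousOn_primitive_interval hint
      rwa [huIcc] at this

lemma rterm_norm_le {n : ℕ} {b M : ℝ} (hM : 0 ≤ M) {X : ℝ → Matrix (Fin n) (Fin n) ℝ}
    (hX : ContinuousOn X (Set.Icc 0 b))
    (hXM : ∀ t ∈ Set.Icc (0:ℝ) b, ‖X t‖ ≤ M) (k : ℕ) :
    ∀ x ∈ Set.Icc (0:ℝ) b, ‖rterm X k x‖ ≤ (n * M) ^ k * x ^ k / k.factorial := by
  induction k with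
  | zero => intro x hx; simpa [rterm] using mat_norm_one_le
  | succ k ih =>
      intro x hx
      obtain ⟨hx0, hxb⟩ := hx
      have hb : (0:ℝ) ≤ b := le_trans hx0 hxb
      have hsub : Set.uIcc (0:ℝ) x ⊆ Set.Icc 0 b := by
        rw [Set.uIcc_of_le hx0]
        exact Set.Icc_subset_Icc le_rfl hxb
      have hcont : ContinuousOn (fun t => rterm X k t * X t) (Set.Icc 0 b) :=
        (rterm_continuousOn hb hX k).mul hX
      have hint1 : IntervalIntegrable (fun t => ‖rterm X k t * X t‖) volume 0 x :=
        ((hcont.norm).mono hsub).intervalIntegrable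
      have hint2 : IntervalIntegrable
          (fun t => (n * M) ^ (k+1) * t ^ k / k.factorial) volume 0 x := by
        apply Continuous.intervalIntegrable; continuity
      have step : ∀ t ∈ Set.Icc (0:ℝ) x, ‖rterm X k t * X t‖ ≤
          (n * M) ^ (k+1) * t ^ k / k.factorial := by
        intro t ht
        have ht0 : (0:ℝ) ≤ t := ht.1
        have ht' : t ∈ Set.Icc (0:ℝ) b := ⟨ht.1, le_trans ht.2 hxb⟩
        have hnn : (0:ℝ) ≤ (n:ℝ) * ((n * M) ^ k * t ^ k / k.factorial) :=
          mul_nonneg (by positivity)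
            (div_nonneg (mul_nonneg (by positivity) (pow_nonneg ht0 k)) (by positivity))
        calc ‖rterm X k t * X t‖ ≤ n * ‖rterm X k t‖ * ‖X t‖ := mat_norm_mul_le _ _
          _ ≤ n * ((n * M) ^ k * t ^ k / k.factorial) * M := by
              apply mul_le_mul _ (hXM t ht') (norm_nonneg _) hnn
              exact mul_le_mul_of_nonneg_left (ih t ht') (by positivity)
          _ = (n * M) ^ (k+1) * t ^ k / k.factorial := by ring
      have hcalc : ‖rterm X (k+1) x‖ ≤ ∫ t in (0:ℝ)..x, (n * M) ^ (k+1) * t ^ k / k.factorial := by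
        have heq : rterm X (k+1) x = ∫ t in (0:ℝ)..x, rterm X k t * X t := rfl
        rw [heq]
        refine le_trans (intervalIntegral.norm_integral_le_integral_norm hx0) ?_
        exact intervalIntegral.integral_mono_on hx0 hint1 hint2 step
      refine le_trans hcalc (le_of_eq ?_)
      have h1 : (∫ t in (0:ℝ)..x, (n * M) ^ (k+1) * t ^ k / k.factorial)
          = ((n * M) ^ (k+1) / k.factorial) * ∫ t in (0:ℝ)..x, t ^ k := by
        rw [← intervalIntegral.integral_const_mul]
        congr 1; funext t; ring
      rw [h1, integral_pow]
      have hkf : ((k.factorial : ℝ)) ≠ 0 := Nat.cast_ne_zero.mpr k.factorial_ne_zero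
      have hk1 : ((k:ℝ) + 1) ≠ 0 := by positivity
      rw [Nat.factorial_succ]
      push_cast
      rw [zero_pow (Nat.succ_ne_zero k), sub_zero, div_mul_div_comm]
      rw [mul_comm ((k.factorial : ℝ)) ((k:ℝ) + 1)]

lemma rterm_succ_hasDerivAt {n : ℕ} {b : ℝ} {X : ℝ → Matrix (Fin n) (Fin n) ℝ}
    (hX : ContinuousOn X (Set.Icc 0 b)) (k : ℕ) {x : ℝ} (hx : x ∈ Set.Ioo (0:ℝ) b) :
    HasDerivAt (rterm X (k+1)) (rterm X k x * X x) x := by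
  obtain ⟨hx0, hxb⟩ := hx
  have hb : (0:ℝ) ≤ b := le_trans hx0.le hxb.le
  have hcont : ContinuousOn (fun t => rterm X k t * X t) (Set.Icc 0 b) :=
    (rterm_continuousOn hb hX k).mul hX
  have hmem : Set.Icc (0:ℝ) b ∈ nhds x := Icc_mem_nhds hx0 hxb
  have hsub : Set.uIcc (0:ℝ) x ⊆ Set.Icc 0 b := by
    rw [Set.uIcc_of_le hx0.le]
    exact Set.Icc_subset_Icc le_rfl hxb.le
  have hint : IntervalIntegrable (fun t => rterm X k t * X t) volume 0 x :=
    (hcont.mono hsub).intervalIntegrable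
  have hmeas : StronglyMeasurableAtFilter (fun t => rterm X k t * X t) (nhds x) :=
    ⟨Set.Icc 0 b, hmem, hcont.aestronglyMeasurable measurableSet_Icc⟩
  have hca : ContinuousAt (fun t => rterm X k t * X t) x := hcont.continuousAt hmem
  have heq : rterm X (k+1) = fun u => ∫ t in (0:ℝ)..u, rterm X k t * X t := rfl
  rw [heq]
  exact intervalIntegral.integral_hasDerivAt_right hint hmeas hca

lemma rterm_summable {n : ℕ} {b M : ℝ} (hM : 0 ≤ M) {X : ℝ → Matrix (Fin n) (Fin n) ℝ}
    (hX : ContinuousOn X (Set.Icc 0 b))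
    (hXM : ∀ t ∈ Set.Icc (0:ℝ) b, ‖X t‖ ≤ M) :
    ∀ y ∈ Set.Icc (0:ℝ) b, Summable (fun k => rterm X k y) := by
  intro y hy
  apply Summable.of_norm_bounded (g := fun k => (n * M * b) ^ k / k.factorial)
    (Real.summable_pow_div_factorial _)
  intro k
  refine le_trans (rterm_norm_le hM hX hXM k y hy) ?_
  have h1 : (n * M) ^ k * y ^ k ≤ (n * M * b) ^ k := by
    rw [← mul_pow]
    exact pow_le_pow_left₀ (mul_nonneg (by positivity) hy.1)
      (mul_le_mul_of_nonneg_left hy.2 (by positivity)) k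
  exact div_le_div_of_nonneg_right h1 (by positivity)

/-- `ℱ(X)` solves `d/dx ℱ(X)(x) = ℱ(X)(x) * X(x)`, `ℱ(X)(0) = 1`. -/
theorem FS_hasDerivAt {n : ℕ} (b : ℝ) (X : ℝ → Matrix (Fin n) (Fin n) ℝ)
    (hX : ContinuousOn X (Set.Icc 0 b)) :
    (∀ x ∈ Set.Ioo (0:ℝ) b, HasDerivAt (FS X) (FS X x * X x) x) ∧ FS X 0 = 1 := by
  constructor
  · intro x hx
    obtain ⟨hx0, hxb⟩ := hx
    have hb : (0:ℝ) < b := lt_trans hx0 hxb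
    obtain ⟨C, hC⟩ := (isCompact_Icc (a := (0:ℝ)) (b := b)).exists_bound_of_continuousOn hX
    set M : ℝ := max C 0 with hMdef
    have hM : 0 ≤ M := le_max_right _ _
    have hXM : ∀ t ∈ Set.Icc (0:ℝ) b, ‖X t‖ ≤ M := fun t ht => le_trans (hC t ht) (le_max_left _ _)
    -- derivative functions
    let g' : ℕ → ℝ → Matrix (Fin n) (Fin n) ℝ :=
      fun k => Nat.rec (fun _ => 0) (fun j _ y => rterm X j y * X y) k
    have hg'0 : ∀ y, g' 0 y = 0 := fun y => rfl
    have hg's : ∀ k y, g' (k+1) y = rterm X k y * X y := fun k y => rfl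
    -- summable bound
    let u : ℕ → ℝ :=
      fun k => Nat.rec (n * M) (fun j _ => (n * M) * ((n * M * b) ^ j / j.factorial)) k
    have hu : Summable u := by
      apply (summable_nat_add_iff 1).mp
      exact (Real.summable_pow_div_factorial (n * M * b)).mul_left ((n:ℝ) * M)
    -- bound
    have hbound : ∀ k, ∀ y ∈ Set.Ioo (0:ℝ) b, ‖g' k y‖ ≤ u k := by
      intro k y hy
      have hy' : y ∈ Set.Icc (0:ℝ) b := ⟨hy.1.le, hy.2.le⟩
      cases k with
      | zero =>
          have : ‖g' 0 y‖ = 0 := by rw [hg'0]; simp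
          rw [this]
          show (0:ℝ) ≤ (n:ℝ) * M
          positivity
      | succ k =>
          rw [hg's]
          show ‖rterm X k y * X y‖ ≤ (n * M) * ((n * M * b) ^ k / k.factorial)
          have hnn : (0:ℝ) ≤ (n:ℝ) * ((n * M) ^ k * y ^ k / k.factorial) :=
            mul_nonneg (by positivity)
              (div_nonneg (mul_nonneg (by positivity) (pow_nonneg hy.1.le k)) (by positivity))
          calc ‖rterm X k y * X y‖ ≤ n * ‖rterm X k y‖ * ‖X y‖ := mat_norm_mul_le _ _
            _ ≤ n * ((n * M) ^ k * y ^ k / k.factorial) * M := by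
                apply mul_le_mul _ (hXM y hy') (norm_nonneg _) hnn
                exact mul_le_mul_of_nonneg_left
                  (rterm_norm_le hM hX hXM k y hy') (by positivity)
            _ ≤ (n * M) * ((n * M * b) ^ k / k.factorial) := by
                have h1 : (n * M) ^ k * y ^ k ≤ (n * M * b) ^ k := by
                  rw [← mul_pow]
                  exact pow_le_pow_left₀ (mul_nonneg (by positivity) hy.1.le)
                    (mul_le_mul_of_nonneg_left hy.2.le (by positivity)) k
                calc (n:ℝ) * ((n * M) ^ k * y ^ k / k.factorial) * M
                    = (n * M) * ((n * M) ^ k * y ^ k / k.factorial) := by ring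
                  _ ≤ (n * M) * ((n * M * b) ^ k / k.factorial) :=
                      mul_le_mul_of_nonneg_left
                        (div_le_div_of_nonneg_right h1 (by positivity))
                        (by positivity)
    -- derivatives
    have hderiv : ∀ k, ∀ y ∈ Set.Ioo (0:ℝ) b, HasDerivAt (rterm X k) (g' k y) y := by
      intro k y hy
      cases k with
      | zero =>
          rw [hg'0]
          have heq : rterm X 0 = fun _ : ℝ => (1 : Matrix (Fin n) (Fin n) ℝ) := rfl
          rw [heq]
          exact hasDerivAt_const y _
      | succ k =>
          rw [hg's]
          exact rterm_succ_hasDerivAt hX k hy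
    have hsum_x : Summable (fun k => rterm X k x) :=
      rterm_summable hM hX hXM x ⟨hx0.le, hxb.le⟩
    have key := hasDerivAt_tsum_of_isPreconnected hu isOpen_Ioo
      (isPreconnected_Ioo (a := (0:ℝ)) (b := b))
      hderiv hbound (show x ∈ Set.Ioo (0:ℝ) b from ⟨hx0, hxb⟩) hsum_x
      (show x ∈ Set.Ioo (0:ℝ) b from ⟨hx0, hxb⟩)
    have hg'sum : Summable (fun k => g' k x) :=
      Summable.of_norm_bounded hu (fun k => hbound k x ⟨hx0, hxb⟩)
    have hshift : (∑' k, g' k x) = ∑' k, rterm X k x * X x := by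
      rw [Summable.tsum_eq_zero_add hg'sum, hg'0]
      simp only [hg's, zero_add]
    have hmul : (∑' k, rterm X k x * X x) = (∑' k, rterm X k x) * X x := by
      let L : Matrix (Fin n) (Fin n) ℝ →L[ℝ] Matrix (Fin n) (Fin n) ℝ :=
        LinearMap.toContinuousLinearMap (LinearMap.mulRight ℝ (X x))
      have hL : ∀ A : Matrix (Fin n) (Fin n) ℝ, L A = A * X x := fun A => rfl
      calc (∑' k, rterm X k x * X x) = ∑' k, L (rterm X k x) :=
            tsum_congr fun k => (hL _).symm
        _ = L (∑' k, rterm X k x) := (L.map_tsum hsum_x).symm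
        _ = (∑' k, rterm X k x) * X x := hL _
    have hfinal : FS X x * X x = ∑' k, g' k x := by
      rw [hshift, hmul]; rfl
    rw [hfinal]
    exact key
  · have h0 : ∀ k, k ≠ 0 → rterm X k 0 = 0 := by
      intro k hk
      cases k with
      | zero => exact absurd rfl hk
      | succ k =>
          show (∫ t in (0:ℝ)..(0:ℝ), rterm X k t * X t) = 0
          exact intervalIntegral.integral_same
    have heq : FS X 0 = ∑' k, rterm X k 0 := rfl
    rw [heq, tsum_eq_single 0 h0]
    rfl
end

section
/- Let A : ℝ → Matrix (Fin n) (Fin n) ℝ and F : ℝ → Matrix (Fin n) (Fin 1) ℝ be continuous on [0, b]. If U : ℝ → Matrix (Fin n) (Fin 1) ℝ is differentiable and satisfies d/dx U(x) = A(x) · U(x) + F(x) on [0, b], then U(x) = ℰ(A)(x) · U(0) + ℰ(A)(x) · ∫_0^x ℱ(−A)(s) · F(s) ds for all x ∈ [0, b]; i.e. every solution of the linear system is of this form with constant matrix C = U(0). -/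
open MeasureTheory Matrix
open Set (uIcc_of_le uIcc_of_ge uIoc_of_le uIoc_of_ge projIcc_of_mem)

/- Matrices are equipped with the elementwise sup norm. -/
attribute [local instance] Matrix.normedAddCommGroup Matrix.normedSpace

set_option linter.unusedSectionVars false

section Aux

variable {ι κ μι : Type*} [Fintype ι] [Fintype κ] [Fintype μι]

lemma norm_matrix_mul_le (A : Matrix ι κ ℝ) (B : Matrix κ μι ℝ) :
    ‖A * B‖ ≤ (Fintype.card κ : ℝ) * ‖A‖ * ‖B‖ := by
  rw [Matrix.norm_le_iff (by positivity)]
  intro i j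
  calc ‖(A * B) i j‖ = ‖∑ k, A i k * B k j‖ := by rw [Matrix.mul_apply]
    _ ≤ ∑ k, ‖A i k * B k j‖ := norm_sum_le _ _
    _ ≤ ∑ _k : κ, ‖A‖ * ‖B‖ := Finset.sum_le_sum fun k _ => by
        rw [norm_mul]
        exact mul_le_mul (norm_entry_le_entrywise_sup_norm A)
          (norm_entry_le_entrywise_sup_norm B) (norm_nonneg _) (norm_nonneg _)
    _ = (Fintype.card κ : ℝ) * ‖A‖ * ‖B‖ := by
        rw [Finset.sum_const, Finset.card_univ, nsmul_eq_mul, mul_assoc]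

noncomputable def mulCLM (ι κ μι : Type*) [Fintype ι] [Fintype κ] [Fintype μι] :
    Matrix ι κ ℝ →L[ℝ] Matrix κ μι ℝ →L[ℝ] Matrix ι μι ℝ :=
  LinearMap.mkContinuous₂
    (LinearMap.mk₂ ℝ (· * ·) (fun A B C => Matrix.add_mul A B C)
      (fun c A B => Matrix.smul_mul c A B) (fun A B C => Matrix.mul_add A B C)
      (fun c A B => Matrix.mul_smul A c B))
    (Fintype.card κ : ℝ) norm_matrix_mul_le

@[simp] lemma mulCLM_apply (A : Matrix ι κ ℝ) (B : Matrix κ μι ℝ) :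
    mulCLM ι κ μι A B = A * B := rfl

lemma HasDerivWithinAt.matMul {f : ℝ → Matrix ι κ ℝ} {g : ℝ → Matrix κ μι ℝ}
    {f' : Matrix ι κ ℝ} {g' : Matrix κ μι ℝ} {s : Set ℝ} {x : ℝ}
    (hf : HasDerivWithinAt f f' s x) (hg : HasDerivWithinAt g g' s x) :
    HasDerivWithinAt (fun t => f t * g t) (f' * g x + f x * g') s x := by
  have h1 : HasDerivWithinAt (fun t => mulCLM ι κ μι (f t)) (mulCLM ι κ μι f') s x :=
    @HasFDerivAt.comp_hasDerivWithinAt ℝ _ (Matrix ι κ ℝ) Matrix.normedAddCommGroup Matrix.normedSpace _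
      ContinuousLinearMap.toNormedAddCommGroup ContinuousLinearMap.toNormedSpace f f' x s
      (mulCLM ι κ μι) (mulCLM ι κ μι) (mulCLM ι κ μι).hasFDerivAt hf
  exact h1.clm_apply hg

lemma HasDerivAt.matMul {f : ℝ → Matrix ι κ ℝ} {g : ℝ → Matrix κ μι ℝ}
    {f' : Matrix ι κ ℝ} {g' : Matrix κ μι ℝ} {x : ℝ}
    (hf : HasDerivAt f f' x) (hg : HasDerivAt g g' x) :
    HasDerivAt (fun t => f t * g t) (f' * g x + f x * g') x := by
  exact hasDerivWithinAt_univ.mp ((hasDerivWithinAt_univ.mpr hf).matMul (hasDerivWithinAt_univ.mpr hg))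

lemma ContinuousOn.matMul {f : α → Matrix ι κ ℝ} {g : α → Matrix κ μι ℝ} {s : Set α}
    [TopologicalSpace α] (hf : ContinuousOn f s) (hg : ContinuousOn g s) :
    ContinuousOn (fun t => f t * g t) s := by
  have h : Continuous fun p : Matrix ι κ ℝ × Matrix κ μι ℝ => p.1 * p.2 :=
    (mulCLM ι κ μι).isBoundedBilinearMap.continuous
  exact h.comp_continuousOn (hf.prodMk hg)

lemma norm_one_matrix_le [DecidableEq ι] : ‖(1 : Matrix ι ι ℝ)‖ ≤ 1 := by
  rw [Matrix.norm_le_iff (by norm_num)]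
  intro i j
  rw [Matrix.one_apply]
  split <;> simp

end Aux

lemma integral_abs_pow (k : ℕ) (x : ℝ) :
    ∫ t in (0:ℝ)..x, |t| ^ k = x * |x| ^ k / (k + 1) := by
  rcases le_total 0 x with h | h
  · rw [intervalIntegral.integral_congr (g := fun t : ℝ => t ^ k)
      (fun t ht => by rw [uIcc_of_le h] at ht; rw [abs_of_nonneg ht.1]),
      integral_pow, abs_of_nonneg h, zero_pow (Nat.succ_ne_zero k), sub_zero, pow_succ]
    ring
  · rw [intervalIntegral.integral_congr (g := fun t : ℝ => (-t) ^ k)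
      (fun t ht => by rw [uIcc_of_ge h] at ht; rw [abs_of_nonpos ht.2])]
    have h2 : (∫ t in (0:ℝ)..x, (-t) ^ k) = (-1 : ℝ) ^ k * ∫ t in (0:ℝ)..x, t ^ k := by
      rw [← intervalIntegral.integral_const_mul]
      exact intervalIntegral.integral_congr fun t _ => by rw [neg_pow]
    rw [h2, integral_pow, abs_of_nonpos h, zero_pow (Nat.succ_ne_zero k), sub_zero,
      neg_pow, pow_succ]
    ring

section Main

variable {ι : Type*} [Fintype ι] [DecidableEq ι]
variable {X : ℝ → Matrix ι ι ℝ} {M : ℝ}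

/-- Abbreviation for the constant. -/
noncomputable def cc (ι : Type*) [Fintype ι] (M : ℝ) : ℝ := (Fintype.card ι : ℝ) * M

lemma cc_nonneg (hM0 : 0 ≤ M) : 0 ≤ cc ι M := by
  unfold cc; positivity

lemma lterm_cont (hX : Continuous X) : ∀ k, Continuous (lterm X k) := by
  intro k
  induction k with
  | zero => exact continuous_const
  | succ k ih =>
    show Continuous fun x => ∫ t in (0:ℝ)..x, X t * lterm X k t
    exact intervalIntegral.continuous_primitive
      (fun a b => ((hX.matrix_mul ih)).intervalIntegrable a b) 0

lemma lterm_norm_le (hX : Continuous X) (hM0 : 0 ≤ M) (hM : ∀ t, ‖X t‖ ≤ M) :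
    ∀ k x, ‖lterm X k x‖ ≤ (cc ι M * |x|) ^ k / (Nat.factorial k) := by
  intro k
  induction k with
  | zero => intro x; simpa [lterm] using norm_one_matrix_le (ι := ι)
  | succ k ih =>
    intro x
    set c := cc ι M with hc
    have hc0 : 0 ≤ c := cc_nonneg hM0
    have hgc : Continuous fun t : ℝ => c ^ (k+1) / (Nat.factorial k) * |t| ^ k :=
      continuous_const.mul (continuous_abs.pow k)
    have hpt : ∀ t : ℝ, ‖X t * lterm X k t‖ ≤ c ^ (k+1) / (Nat.factorial k) * |t| ^ k := by
      intro t
      have h1 : ‖X t * lterm X k t‖ ≤ (Fintype.card ι : ℝ) * ‖X t‖ * ‖lterm X k t‖ :=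
        norm_matrix_mul_le _ _
      have h2 : (Fintype.card ι : ℝ) * ‖X t‖ ≤ c := by
        rw [hc]; unfold cc
        exact mul_le_mul_of_nonneg_left (hM t) (Nat.cast_nonneg _)
      have h3 : (Fintype.card ι : ℝ) * ‖X t‖ * ‖lterm X k t‖ ≤
          c * ((c * |t|) ^ k / (Nat.factorial k)) := by
        apply mul_le_mul h2 (ih t) (norm_nonneg _) hc0
      refine h1.trans (h3.trans (le_of_eq ?_))
      rw [mul_pow]
      have : (Nat.factorial k : ℝ) ≠ 0 := Nat.cast_ne_zero.2 (Nat.factorial_ne_zero k)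
      field_simp
      ring
    have hb : ‖∫ t in (0:ℝ)..x, X t * lterm X k t‖ ≤
        |∫ t in (0:ℝ)..x, c ^ (k+1) / (Nat.factorial k) * |t| ^ k| := by
      apply intervalIntegral.norm_integral_le_abs_of_norm_le
      · exact Filter.Eventually.of_forall fun t => hpt t
      · exact hgc.intervalIntegrable _ _
    have heq : (∫ t in (0:ℝ)..x, c ^ (k+1) / (Nat.factorial k) * |t| ^ k)
        = c ^ (k+1) / (Nat.factorial k) * (x * |x| ^ k / (k + 1)) := by
      rw [intervalIntegral.integral_const_mul, integral_abs_pow]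
    show ‖∫ t in (0:ℝ)..x, X t * lterm X k t‖ ≤ _
    refine hb.trans (le_of_eq ?_)
    rw [heq, abs_mul, abs_div, abs_pow, abs_of_nonneg hc0, Nat.abs_cast, abs_div,
      abs_mul, abs_pow, abs_abs, abs_of_nonneg (by positivity : (0:ℝ) ≤ (k:ℝ) + 1),
      mul_pow, Nat.factorial_succ]
    have h4 : (Nat.factorial k : ℝ) ≠ 0 := Nat.cast_ne_zero.2 (Nat.factorial_ne_zero k)
    push_cast
    field_simp
    ring

lemma lterm_summable (hX : Continuous X) (hM0 : 0 ≤ M) (hM : ∀ t, ‖X t‖ ≤ M) (x : ℝ) :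
    Summable fun k => lterm X k x :=
  Summable.of_norm_bounded (Real.summable_pow_div_factorial (cc ι M * |x|))
    (fun k => lterm_norm_le hX hM0 hM k x)

lemma ES_cont (hX : Continuous X) (hM0 : 0 ≤ M) (hM : ∀ t, ‖X t‖ ≤ M) :
    Continuous (ES X) := by
  rw [continuous_iff_continuousAt]
  intro x₀
  set c := cc ι M with hc
  have hc0 : 0 ≤ c := cc_nonneg hM0
  have hco : ContinuousOn (ES X) (Metric.ball x₀ 1) := by
    apply continuousOn_tsum (u := fun k => (c * (|x₀| + 1)) ^ k / (Nat.factorial k))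
    · exact fun k => (lterm_cont hX k).continuousOn
    · exact Real.summable_pow_div_factorial _
    · intro k x hxm
      refine (lterm_norm_le hX hM0 hM k x).trans ?_
      have hxle : |x| ≤ |x₀| + 1 := by
        have := mem_ball_iff_norm.1 hxm
        calc |x| = |x₀ + (x - x₀)| := by ring_nf
          _ ≤ |x₀| + |x - x₀| := abs_add_le _ _
          _ ≤ |x₀| + 1 := by
              have : |x - x₀| ≤ 1 := le_of_lt (by simpa [Real.norm_eq_abs] using this)
              linarith
      gcongr
  exact hco.continuousAt (Metric.ball_mem_nhds _ one_pos)

lemma setIntegral_swap_aux {E : Type*} [NormedAddCommGroup E] [NormedSpace ℝ E]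
    [CompleteSpace E] {f : ℕ → ℝ → E} {a b : ℝ} (hab : a ≤ b)
    (hf : ∀ k, Continuous (f k)) {u : ℕ → ℝ} (hu : Summable u)
    (hbound : ∀ k t, t ∈ Set.Ioc a b → ‖f k t‖ ≤ u k) :
    ∑' k, (∫ t in Set.Ioc a b, f k t) = ∫ t in Set.Ioc a b, ∑' k, f k t := by
  apply MeasureTheory.integral_tsum_of_summable_integral_norm
  · exact fun k => (hf k).integrableOn_Ioc
  · apply Summable.of_nonneg_of_le (fun k => integral_nonneg fun t => norm_nonneg _)
      (fun k => ?_) (hu.mul_left (b - a))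
    calc (∫ t in Set.Ioc a b, ‖f k t‖)
        ≤ ∫ _t in Set.Ioc a b, u k := by
          apply setIntegral_mono_on ((hf k).norm.integrableOn_Ioc)
            (integrableOn_const measure_Ioc_lt_top.ne)
            measurableSet_Ioc
          exact fun t ht => hbound k t ht
      _ = (b - a) * u k := by
          rw [setIntegral_const, Real.volume_real_Ioc_of_le hab, smul_eq_mul]

lemma tsum_intervalIntegral_swap {E : Type*} [NormedAddCommGroup E] [NormedSpace ℝ E]
    [CompleteSpace E] {f : ℕ → ℝ → E} {x : ℝ}
    (hf : ∀ k, Continuous (f k)) {u : ℕ → ℝ} (hu : Summable u)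
    (hbound : ∀ k t, t ∈ Set.uIoc 0 x → ‖f k t‖ ≤ u k) :
    ∑' k, (∫ t in (0:ℝ)..x, f k t) = ∫ t in (0:ℝ)..x, ∑' k, f k t := by
  rcases le_total 0 x with h | h
  · rw [intervalIntegral.integral_of_le h]
    rw [tsum_congr (fun k => intervalIntegral.integral_of_le h)]
    exact setIntegral_swap_aux h hf hu (fun k t ht => hbound k t (by rwa [uIoc_of_le h]))
  · rw [intervalIntegral.integral_of_ge h]
    rw [tsum_congr (fun k => intervalIntegral.integral_of_ge h), tsum_neg]
    rw [setIntegral_swap_aux h hf hu (fun k t ht => hbound k t (by rwa [uIoc_of_ge h]))]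

lemma abs_le_of_mem_uIoc {t x : ℝ} (ht : t ∈ Set.uIoc 0 x) : |t| ≤ |x| := by
  rcases le_total 0 x with h | h
  · rw [uIoc_of_le h] at ht
    rw [abs_of_nonneg (le_of_lt ht.1), abs_of_nonneg h]; exact ht.2
  · rw [uIoc_of_ge h] at ht
    rw [abs_of_nonpos (ht.2), abs_of_nonpos h]; linarith [ht.1]

lemma ES_eq (hX : Continuous X) (hM0 : 0 ≤ M) (hM : ∀ t, ‖X t‖ ≤ M) (x : ℝ) :
    ES X x = 1 + ∫ t in (0:ℝ)..x, X t * ES X t := by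
  set c := cc ι M with hc
  have hc0 : 0 ≤ c := cc_nonneg hM0
  have hsum := lterm_summable hX hM0 hM
  have h1 : ES X x = lterm X 0 x + ∑' k, lterm X (k+1) x := (hsum x).tsum_eq_zero_add
  have h2 : ∀ k, lterm X (k+1) x = ∫ t in (0:ℝ)..x, X t * lterm X k t := fun k => rfl
  have hswap : ∑' k, (∫ t in (0:ℝ)..x, X t * lterm X k t)
      = ∫ t in (0:ℝ)..x, ∑' k, X t * lterm X k t := by
    apply tsum_intervalIntegral_swap (u := fun k => c * ((c * |x|) ^ k / (Nat.factorial k)))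
      (fun k => hX.matrix_mul (lterm_cont hX k))
      ((Real.summable_pow_div_factorial (c * |x|)).mul_left c)
    intro k t ht
    have h3 : ‖X t * lterm X k t‖ ≤ (Fintype.card ι : ℝ) * ‖X t‖ * ‖lterm X k t‖ :=
      norm_matrix_mul_le _ _
    have h4 : (Fintype.card ι : ℝ) * ‖X t‖ ≤ c := by
      rw [hc]; unfold cc
      exact mul_le_mul_of_nonneg_left (hM t) (Nat.cast_nonneg _)
    have habs : c * |t| ≤ c * |x| := mul_le_mul_of_nonneg_left (abs_le_of_mem_uIoc ht) hc0
    have hpow : (c * |t|) ^ k ≤ (c * |x|) ^ k := pow_le_pow_left₀ (by positivity) habs k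
    refine h3.trans (mul_le_mul h4 ((lterm_norm_le hX hM0 hM k t).trans
      ((div_le_div_iff_of_pos_right (by positivity)).mpr hpow)) (norm_nonneg _) hc0)
  have h5 : ∀ t, ∑' k, X t * lterm X k t = X t * ES X t := by
    intro t
    have := (mulCLM ι ι ι (X t)).map_tsum (hsum t)
    simpa [ES] using this.symm
  rw [h1, tsum_congr h2, hswap, intervalIntegral.integral_congr (fun t _ => h5 t)]
  rfl

lemma ES_hasDerivAt (hX : Continuous X) (hM0 : 0 ≤ M) (hM : ∀ t, ‖X t‖ ≤ M) (x : ℝ) :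
    HasDerivAt (ES X) (X x * ES X x) x := by
  have hg : Continuous fun t => X t * ES X t := hX.matrix_mul (ES_cont hX hM0 hM)
  have h1 : HasDerivAt (fun u => (1 : Matrix ι ι ℝ) + ∫ t in (0:ℝ)..u, X t * ES X t)
      (X x * ES X x) x := by
    have h := (hasDerivAt_const x (1 : Matrix ι ι ℝ)).add
      ((hg.integral_hasStrictDerivAt 0 x).hasDerivAt)
    rw [zero_add] at h
    exact h
  exact h1.congr_of_eventuallyEq (Filter.Eventually.of_forall fun y => ES_eq hX hM0 hM y)

lemma ES_zero : ES X 0 = 1 := by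
  unfold ES
  rw [tsum_eq_single 0]
  · rfl
  · intro k hk
    match k, hk with
    | k + 1, _ => exact intervalIntegral.integral_same

end Main

section Transpose

variable {ι κ : Type*} [Fintype ι] [Fintype κ]

/-- Transpose as a continuous linear map. -/
noncomputable def trCLM (ι κ : Type*) [Fintype ι] [Fintype κ] :
    Matrix ι κ ℝ →L[ℝ] Matrix κ ι ℝ :=
  LinearMap.mkContinuous
    { toFun := fun A => Aᵀ
      map_add' := fun A B => Matrix.transpose_add A B
      map_smul' := fun c A => Matrix.transpose_smul c A }
    1 (fun A => by simp [Matrix.norm_transpose])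

@[simp] lemma trCLM_apply (A : Matrix ι κ ℝ) : trCLM ι κ A = Aᵀ := rfl

variable [DecidableEq ι] {X : ℝ → Matrix ι ι ℝ} {M : ℝ}

lemma rterm_eq_transpose (hX : Continuous X) (k : ℕ) (x : ℝ) :
    rterm X k x = (lterm (fun t => (X t)ᵀ) k x)ᵀ := by
  induction k generalizing x with
  | zero => exact (Matrix.transpose_one).symm
  | succ k ih =>
    have hXT : Continuous fun t => (X t)ᵀ := hX.matrix_transpose
    have h1 : ∀ t, rterm X k t * X t = trCLM ι ι ((X t)ᵀ * lterm (fun s => (X s)ᵀ) k t) := by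
      intro t
      rw [trCLM_apply, Matrix.transpose_mul, Matrix.transpose_transpose, ih]
    show (∫ t in (0:ℝ)..x, rterm X k t * X t) = _
    rw [intervalIntegral.integral_congr (fun t _ => h1 t)]
    refine (ContinuousLinearMap.intervalIntegral_comp_comm _
        ((hXT.matrix_mul (lterm_cont hXT k)).intervalIntegrable _ _)).trans ?_
    rfl

lemma FS_eq_transpose (hX : Continuous X) (hM0 : 0 ≤ M) (hM : ∀ t, ‖X t‖ ≤ M) (x : ℝ) :
    FS X x = (ES (fun t => (X t)ᵀ) x)ᵀ := by
  have hXT : Continuous fun t => (X t)ᵀ := hX.matrix_transpose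
  have hMT : ∀ t, ‖(X t)ᵀ‖ ≤ M := fun t => by rw [Matrix.norm_transpose]; exact hM t
  have hsum := lterm_summable hXT hM0 hMT x
  unfold FS
  rw [tsum_congr (fun k => rterm_eq_transpose hX k x)]
  have := (trCLM ι ι).map_tsum hsum
  simpa [ES] using this.symm

lemma FS_cont (hX : Continuous X) (hM0 : 0 ≤ M) (hM : ∀ t, ‖X t‖ ≤ M) :
    Continuous (FS X) := by
  have hXT : Continuous fun t => (X t)ᵀ := hX.matrix_transpose
  have hMT : ∀ t, ‖(X t)ᵀ‖ ≤ M := fun t => by rw [Matrix.norm_transpose]; exact hM t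
  have : Continuous fun x => (ES (fun t => (X t)ᵀ) x)ᵀ :=
    (ES_cont hXT hM0 hMT).matrix_transpose
  exact this.congr fun x => (FS_eq_transpose hX hM0 hM x).symm

lemma FS_hasDerivAt_s11 (hX : Continuous X) (hM0 : 0 ≤ M) (hM : ∀ t, ‖X t‖ ≤ M) (x : ℝ) :
    HasDerivAt (FS X) (FS X x * X x) x := by
  have hXT : Continuous fun t => (X t)ᵀ := hX.matrix_transpose
  have hMT : ∀ t, ‖(X t)ᵀ‖ ≤ M := fun t => by rw [Matrix.norm_transpose]; exact hM t
  have h1 : HasDerivAt (fun y => (ES (fun t => (X t)ᵀ) y)ᵀ)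
      (((X x)ᵀ * ES (fun t => (X t)ᵀ) x)ᵀ) x := by
    have h0 := ES_hasDerivAt hXT hM0 hMT x
    have := (trCLM ι ι).hasFDerivAt.comp_hasDerivAt x h0
    exact this
  have h2 : (((X x)ᵀ * ES (fun t => (X t)ᵀ) x)ᵀ) = FS X x * X x := by
    rw [Matrix.transpose_mul, Matrix.transpose_transpose, FS_eq_transpose hX hM0 hM]
  rw [h2] at h1
  exact h1.congr_of_eventuallyEq
    (Filter.Eventually.of_forall fun y => FS_eq_transpose hX hM0 hM y)

lemma FS_zero : FS X 0 = 1 := by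
  unfold FS
  rw [tsum_eq_single 0]
  · rfl
  · intro k hk
    match k, hk with
    | k + 1, _ => exact intervalIntegral.integral_same

end Transpose

section Congr

variable {ι : Type*} [Fintype ι] [DecidableEq ι]
variable {X₁ X₂ : ℝ → Matrix ι ι ℝ} {b : ℝ}

lemma lterm_congr (hb : 0 ≤ b) (h : Set.EqOn X₁ X₂ (Set.Icc 0 b)) :
    ∀ k, ∀ x ∈ Set.Icc (0:ℝ) b, lterm X₁ k x = lterm X₂ k x := by
  intro k
  induction k with
  | zero => intro x _; rfl
  | succ k ih =>
    intro x hx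
    show (∫ t in (0:ℝ)..x, X₁ t * lterm X₁ k t) = ∫ t in (0:ℝ)..x, X₂ t * lterm X₂ k t
    apply intervalIntegral.integral_congr
    intro t ht
    rw [uIcc_of_le hx.1] at ht
    have htb : t ∈ Set.Icc (0:ℝ) b := ⟨ht.1, ht.2.trans hx.2⟩
    show X₁ t * lterm X₁ k t = X₂ t * lterm X₂ k t
    rw [h htb, ih t htb]

lemma ES_congr (hb : 0 ≤ b) (h : Set.EqOn X₁ X₂ (Set.Icc 0 b)) :
    ∀ x ∈ Set.Icc (0:ℝ) b, ES X₁ x = ES X₂ x := by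
  intro x hx
  exact tsum_congr fun k => lterm_congr hb h k x hx

lemma rterm_congr (hb : 0 ≤ b) (h : Set.EqOn X₁ X₂ (Set.Icc 0 b)) :
    ∀ k, ∀ x ∈ Set.Icc (0:ℝ) b, rterm X₁ k x = rterm X₂ k x := by
  intro k
  induction k with
  | zero => intro x _; rfl
  | succ k ih =>
    intro x hx
    show (∫ t in (0:ℝ)..x, rterm X₁ k t * X₁ t) = ∫ t in (0:ℝ)..x, rterm X₂ k t * X₂ t
    apply intervalIntegral.integral_congr
    intro t ht
    rw [uIcc_of_le hx.1] at ht
    have htb : t ∈ Set.Icc (0:ℝ) b := ⟨ht.1, ht.2.trans hx.2⟩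
    show rterm X₁ k t * X₁ t = rterm X₂ k t * X₂ t
    rw [h htb, ih t htb]

lemma FS_congr (hb : 0 ≤ b) (h : Set.EqOn X₁ X₂ (Set.Icc 0 b)) :
    ∀ x ∈ Set.Icc (0:ℝ) b, FS X₁ x = FS X₂ x := by
  intro x hx
  exact tsum_congr fun k => rterm_congr hb h k x hx

end Congr


/-- every solution of `U' = A·U + F` on `[0,b]` has the form
`ℰ(A)·U(0) + ℰ(A)·∫_0^x ℱ(−A)(s)·F(s) ds`. -/
theorem linear_ODE_general_solution {n : ℕ} (b : ℝ)
    (A : ℝ → Matrix (Fin n) (Fin n) ℝ) (F : ℝ → Matrix (Fin n) (Fin 1) ℝ)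
    (hA : ContinuousOn A (Set.Icc 0 b)) (hF : ContinuousOn F (Set.Icc 0 b))
    (U : ℝ → Matrix (Fin n) (Fin 1) ℝ)
    (hU : ∀ x ∈ Set.Icc (0:ℝ) b,
      HasDerivWithinAt U (A x * U x + F x) (Set.Icc 0 b) x) :
    ∀ x ∈ Set.Icc (0:ℝ) b,
      U x = ES A x * U 0 + ES A x * ∫ s in (0:ℝ)..x, FS (fun t => -A t) s * F s := by
  intro x hx
  obtain ⟨hx0, hxb⟩ := hx
  have hb : (0:ℝ) ≤ b := hx0.trans hxb
  -- the clamped coefficient matrix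
  set A' : ℝ → Matrix (Fin n) (Fin n) ℝ :=
    fun t => A ((Set.projIcc 0 b hb t : Set.Icc (0:ℝ) b) : ℝ) with hA'def
  have hA'cont : Continuous A' := by
    have h1 : Continuous ((Set.Icc (0:ℝ) b).restrict A) := hA.restrict
    exact h1.comp continuous_projIcc
  have hA'eq : Set.EqOn A' A (Set.Icc 0 b) := by
    intro t ht
    simp only [hA'def, Set.projIcc_of_mem hb ht]
  -- a global bound
  obtain ⟨C, hC⟩ := (isCompact_Icc).exists_bound_of_continuousOn hA
  set M : ℝ := max C 0 with hMdef
  have hM0 : (0:ℝ) ≤ M := le_max_right _ _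
  have hM : ∀ t, ‖A' t‖ ≤ M := fun t =>
    le_trans (hC _ (Set.projIcc 0 b hb t).2) (le_max_left _ _)
  set Y : ℝ → Matrix (Fin n) (Fin n) ℝ := fun t => -(A' t) with hYdef
  have hYcont : Continuous Y := hA'cont.neg
  have hMY : ∀ t, ‖Y t‖ ≤ M := fun t => by rw [hYdef]; simpa using hM t
  -- the Wronskian is constant = 1
  have hW : ∀ y : ℝ, FS Y y * ES A' y = 1 := by
    have hWd : ∀ y : ℝ, HasDerivAt (fun z => FS Y z * ES A' z) 0 y := by
      intro y
      have h1 := (FS_hasDerivAt_s11 hYcont hM0 hMY y).matMul (ES_hasDerivAt hA'cont hM0 hM y)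
      have h2 : FS Y y * Y y * ES A' y + FS Y y * (A' y * ES A' y) = 0 := by
        rw [hYdef]
        simp [Matrix.mul_assoc, Matrix.mul_neg, Matrix.neg_mul]
      rwa [h2] at h1
    intro y
    have hconst : (fun z => FS Y z * ES A' z) y = (fun z => FS Y z * ES A' z) 0 :=
      is_const_of_deriv_eq_zero (fun z => (hWd z).differentiableAt)
        (fun z => (hWd z).deriv) y 0
    simpa [ES_zero, FS_zero] using hconst
  have hW' : ∀ y : ℝ, ES A' y * FS Y y = 1 := fun y => mul_eq_one_comm.2 (hW y)
  -- the function V = FS Y * U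
  set V : ℝ → Matrix (Fin n) (Fin 1) ℝ := fun t => FS Y t * U t with hVdef
  have hVd : ∀ y ∈ Set.Icc (0:ℝ) b, HasDerivWithinAt V (FS Y y * F y) (Set.Icc 0 b) y := by
    intro y hy
    have h1 := ((FS_hasDerivAt_s11 hYcont hM0 hMY y).hasDerivWithinAt (s := Set.Icc 0 b)).matMul
      (hU y hy)
    have hYy : Y y = -(A y) := by
      show -(A' y) = -(A y)
      rw [hA'eq hy]
    have h2 : FS Y y * Y y * U y + FS Y y * (A y * U y + F y) = FS Y y * F y := by
      rw [hYy]
      simp [Matrix.mul_add, Matrix.mul_assoc, Matrix.mul_neg, Matrix.neg_mul]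
    rwa [h2] at h1
  -- FTC-2 on [0, x]
  have hVcont : ContinuousOn V (Set.Icc 0 b) :=
    ((FS_cont hYcont hM0 hMY).continuousOn).matMul
      (fun y hy => (hU y hy).continuousWithinAt)
  have hIcc : Set.Icc (0:ℝ) x ⊆ Set.Icc 0 b := Set.Icc_subset_Icc le_rfl hxb
  have hFTC : (∫ s in (0:ℝ)..x, FS Y s * F s) = V x - V 0 := by
    apply intervalIntegral.integral_eq_sub_of_hasDeriv_right_of_le hx0
      (hVcont.mono hIcc)
    · intro y hy
      have hyIcc : y ∈ Set.Icc (0:ℝ) b := ⟨le_of_lt hy.1, (le_of_lt hy.2).trans hxb⟩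
      refine (hVd y hyIcc).mono_of_mem_nhdsWithin ?_
      have h1 : Set.Ioc y b ∈ nhdsWithin y (Set.Ioi y) :=
        Ioc_mem_nhdsGT_of_mem ⟨le_rfl, lt_of_lt_of_le hy.2 hxb⟩
      exact Filter.mem_of_superset h1 (fun t ht => ⟨hyIcc.1.trans (le_of_lt ht.1), ht.2⟩)
    · apply ContinuousOn.intervalIntegrable
      rw [uIcc_of_le hx0]
      exact (((FS_cont hYcont hM0 hMY).continuousOn).matMul (hF.mono hIcc)).mono
        (fun t ht => ht)
  have hV0 : V 0 = U 0 := by rw [hVdef]; simp [FS_zero]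
  -- put it together
  have hUx : U x = ES A' x * V x := by
    rw [hVdef, ← Matrix.mul_assoc, hW' x, Matrix.one_mul]
  have hfinal : U x = ES A' x * U 0 + ES A' x * ∫ s in (0:ℝ)..x, FS Y s * F s := by
    rw [hUx, hFTC, hV0, Matrix.mul_sub]
    abel
  rw [hfinal, ES_congr hb hA'eq x ⟨hx0, hxb⟩]
  have hYeq : Set.EqOn (fun t => -A t) Y (Set.Icc 0 b) := by
    intro t ht
    simp [hYdef, hA'eq ht]
  have hInt : (∫ s in (0:ℝ)..x, FS (fun t => -A t) s * F s) = ∫ s in (0:ℝ)..x, FS Y s * F s := by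
    apply intervalIntegral.integral_congr
    intro s hs
    rw [uIcc_of_le hx0] at hs
    show FS (fun t => -A t) s * F s = FS Y s * F s
    rw [FS_congr hb hYeq s (hIcc hs)]
  rw [hInt]
end
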